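/- For any disjunctive database D (a finite set of non-empty finite sets of facts, each set interpreted as a disjunction), the minimal models of D coincide with the minimal models of reduction(D), where reduction(D) removes every disjunction that properly contains (as a set of facts) another disjunction of D. -/
import Mathlib


variable {F : Type*} [DecidableEq F]

/-- M is a model of the disjunctive database D: it meets every disjunction. -/
def IsModel (D : Finset (Finset F)) (M : Finset F) : Prop :=
  ∀ d ∈ D, ∃ t ∈ d, t ∈ M

/-- M is a minimal model of D. -/
def IsMinModel (D : Finset (Finset F)) (M : Finset F) : Prop :=
  IsModel D M ∧ ∀ M' ⊂ M, ¬ IsModel D M'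

/-- reduction removes every disjunction properly containing another disjunction of D. -/
def reduction (D : Finset (Finset F)) : Finset (Finset F) :=
  D.filter (fun d => ∀ d' ∈ D, ¬ d' ⊂ d)

lemma exists_red_subset (D : Finset (Finset F)) :
    ∀ d ∈ D, ∃ d' ∈ reduction D, d' ⊆ d := by
  intro d
  induction d using Finset.strongInduction with
  | _ d ih =>
    intro hd
    by_cases h : ∀ d' ∈ D, ¬ d' ⊂ d
    · exact ⟨d, Finset.mem_filter.mpr ⟨hd, h⟩, subset_rfl⟩
    · push_neg at h
      obtain ⟨d', hd', hss⟩ := h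
      obtain ⟨d'', hd''r, hsub⟩ := ih d' hss hd'
      exact ⟨d'', hd''r, hsub.trans hss.subset⟩

lemma model_iff (D : Finset (Finset F)) (M : Finset F) :
    IsModel D M ↔ IsModel (reduction D) M := by
  constructor
  · intro h d hd
    exact h d (Finset.mem_filter.mp hd).1
  · intro h d hd
    obtain ⟨d', hd', hsub⟩ := exists_red_subset D d hd
    obtain ⟨t, ht, htM⟩ := h d' hd'
    exact ⟨t, hsub ht, htM⟩

theorem stmt0 (D : Finset (Finset F)) (hD : ∀ d ∈ D, d.Nonempty) :
    ∀ M : Finset F, IsMinModel D M ↔ IsMinModel (reduction D) M := by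
  intro M
  unfold IsMinModel
  simp only [← model_iff]
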